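/- Let m_1, m_2, m be multiset partitions of {1^k,1'^k}. There exists a polynomial p with rational coefficients such that for every positive integer n and all a, c ∈ M(n,k) with E(a,c) = m, one has |{b ∈ M(n,k) : E(a,b) = m_2 and E(b,c) = m_1}| = p(n). Moreover, p takes integer values at all integers. -/

import Mathlib

/-- `M(n,k)`: the set of `n`-tuples of non-negative integers summing to `k`. -/
abbrev Mnk (n k : ℕ) : Type := {a : Fin n → ℕ // ∑ i, a i = k}

instance (n k : ℕ) : Fintype (Mnk n k) :=
  Fintype.subtype (Finset.Nat.antidiagonalTuple n k) fun _ =>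
    Finset.Nat.mem_antidiagonalTuple

/-- The action of a permutation `w ∈ S_n` on `M(n,k)`: `(w • a)_i = a_{w⁻¹(i)}`. -/
def permA {n k : ℕ} (w : Equiv.Perm (Fin n)) (a : Mnk n k) : Mnk n k :=
  ⟨fun i => a.1 (w⁻¹ i), (Equiv.sum_comp w⁻¹ a.1).trans a.2⟩

/-- `E(a,b)`: the multiset `{(a_1,b_1),…,(a_n,b_n)}` with all copies of `(0,0)` removed. -/
def Epairs {n k : ℕ} (a b : Mnk n k) : Multiset (ℕ × ℕ) :=
  (Multiset.map (fun i => (a.1 i, b.1 i)) Finset.univ.val).filter fun p => p ≠ (0, 0)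

/-- A multiset partition of `{1^k, 1'^k}`, encoded as a multiset of pairs `(p,q)` of
non-negative integers, each pair `≠ (0,0)`, with first coordinates summing to `k` and
second coordinates summing to `k`. -/
def IsMSP (k : ℕ) (m : Multiset (ℕ × ℕ)) : Prop :=
  (0, 0) ∉ m ∧ (m.map Prod.fst).sum = k ∧ (m.map Prod.snd).sum = k

lemma map_univ_comp_equiv {α β γ : Type*} [Fintype α] [Fintype β] (e : α ≃ β) (u : β → γ) :
    Multiset.map u Finset.univ.val = Multiset.map (fun a => u (e a)) Finset.univ.val := by
  conv_lhs => rw [← Finset.map_univ_equiv e]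
  rw [Finset.map_val, Multiset.map_map]
  rfl

lemma exists_perm_comp {α : Type*} [DecidableEq α] :
    ∀ {n : ℕ} (u v : Fin n → α),
      Multiset.map u Finset.univ.val = Multiset.map v Finset.univ.val →
      ∃ σ : Equiv.Perm (Fin n), u = v ∘ σ := by
  intro n
  induction n with
  | zero => exact fun u v _ => ⟨1, funext fun i => i.elim0⟩
  | succ n ih =>
    intro u v h
    have hcons : ∀ w : Fin (n+1) → α,
        Multiset.map w Finset.univ.val =
          w 0 ::ₘ Multiset.map (fun x : Fin n => w x.succ) Finset.univ.val := by
      intro w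
      rw [Fin.univ_succ, Finset.cons_val, Multiset.map_cons, Finset.map_val,
        Multiset.map_map]
      rfl
    have hu0 : u 0 ∈ Multiset.map v Finset.univ.val := by
      rw [← h]
      exact Multiset.mem_map.2 ⟨0, Finset.mem_univ_val _, rfl⟩
    obtain ⟨j, _, hj⟩ := Multiset.mem_map.1 hu0
    set v2 : Fin (n+1) → α := fun y => v (Equiv.swap 0 j y) with hv2
    have hv2univ : Multiset.map v2 Finset.univ.val = Multiset.map v Finset.univ.val :=
      (map_univ_comp_equiv (Equiv.swap 0 j) v).symm
    have h20 : v2 0 = u 0 := by simp [hv2, hj]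
    have htail : Multiset.map (fun x : Fin n => u x.succ) Finset.univ.val =
        Multiset.map (fun x : Fin n => v2 x.succ) Finset.univ.val := by
      have := (hcons u).symm.trans (h.trans ((hv2univ.symm).trans (hcons v2)))
      rw [← h20] at this
      exact (Multiset.cons_inj_right _).1 this
    obtain ⟨τ, hτ⟩ := ih (fun x : Fin n => u x.succ) (fun x : Fin n => v2 x.succ) htail
    refine ⟨Equiv.Perm.decomposeFin.symm (j, τ), funext fun i => ?_⟩
    refine Fin.cases ?_ (fun x => ?_) i
    · simp [hj]
    · have := congrFun hτ x
      simpa [hv2] using this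

/-- nonzero values of a tuple, as a multiset -/
def nzm {z : ℕ} (h : Fin z → ℕ) : Multiset ℕ :=
  (Multiset.map h Finset.univ.val).filter (· ≠ 0)

def autT (T : Multiset ℕ) : ℕ := ∏ v ∈ T.toFinset, (T.count v).factorial

lemma nzm_eq_map_support {z : ℕ} (g : Fin z → ℕ) :
    nzm g = Multiset.map g (Finset.univ.filter (fun i => g i ≠ 0)).val := by
  rw [nzm, Multiset.filter_map, Finset.filter_val]
  rfl

lemma card_nzm {z N : ℕ} (T : Multiset ℕ) (hT : (0:ℕ) ∉ T) (hN : ∀ v ∈ T, v ≤ N) :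
    ((Finset.univ.filter
        (fun h : Fin z → Fin (N+1) => nzm (fun i => (h i : ℕ)) = T)).card) * autT T
      = z.descFactorial (Multiset.card T) := by
  induction T using Quotient.inductionOn with
  | h LT =>
  change ((Finset.univ.filter
      (fun h : Fin z → Fin (N+1) => nzm (fun i => (h i : ℕ)) = (LT : Multiset ℕ))).card)
      * autT (LT : Multiset ℕ) = z.descFactorial (Multiset.card (LT : Multiset ℕ))
  have hT' : (0:ℕ) ∉ LT := fun h => hT (by exact_mod_cast h)
  have hN' : ∀ v ∈ LT, v ≤ N := fun v hv => hN v (by exact_mod_cast hv)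
  set d := LT.length with hd
  set u : Fin d → ℕ := LT.get with hu
  have humem : ∀ j, u j ∈ LT := fun j => LT.get_mem j
  have hune : ∀ j, u j ≠ 0 := fun j h => hT' (h ▸ humem j)
  have huN : ∀ j, u j < N + 1 := fun j => Nat.lt_succ_of_le (hN' _ (humem j))
  have hofn : Multiset.map u Finset.univ.val = (LT : Multiset ℕ) := by
    rw [Fin.univ_val_map]
    exact congrArg _ (List.ofFn_get LT)
  -- the map from embeddings to functions
  set Φ : (Fin d ↪ Fin z) → (Fin z → Fin (N+1)) :=
    fun ι i => if hx : ∃ j, ι j = i then ⟨u (Classical.choose hx), huN _⟩ else 0 with hΦ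
  have hΦapp : ∀ (ι : Fin d ↪ Fin z) (j : Fin d), ((Φ ι (ι j) : ℕ)) = u j := by
    intro ι j
    have hx : ∃ j', ι j' = ι j := ⟨j, rfl⟩
    have : Classical.choose hx = j := ι.injective (Classical.choose_spec hx)
    simp [hΦ, dif_pos hx, this]
  have hΦ0 : ∀ (ι : Fin d ↪ Fin z) (i : Fin z), (¬ ∃ j, ι j = i) → Φ ι i = 0 := by
    intro ι i hx; simp [hΦ, dif_neg hx]
  have hsupp : ∀ ι : Fin d ↪ Fin z,
      Finset.univ.filter (fun i => ((Φ ι i : ℕ)) ≠ 0) = Finset.univ.map ι := by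
    intro ι
    ext i
    simp only [Finset.mem_filter, Finset.mem_univ, true_and, Finset.mem_map]
    constructor
    · intro hne
      by_contra hx
      push_neg at hx
      rw [hΦ0 ι i (by simpa using hx)] at hne
      simp at hne
    · rintro ⟨j, _, rfl⟩
      rw [hΦapp]
      exact hune j
  have hΦmem : ∀ ι : Fin d ↪ Fin z, nzm (fun i => ((Φ ι i : ℕ))) = (LT : Multiset ℕ) := by
    intro ι
    rw [nzm_eq_map_support, hsupp, Finset.map_val, Multiset.map_map]
    rw [show ((fun i => ((Φ ι i : ℕ))) ∘ ι) = u from funext fun j => hΦapp ι j]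
    exact hofn
  -- support of a function with nzm = LT
  have hcard_supp : ∀ g : Fin z → Fin (N+1), nzm (fun i => (g i : ℕ)) = (LT : Multiset ℕ) →
      (Finset.univ.filter (fun i => (g i : ℕ) ≠ 0)).card = d := by
    intro g hg
    have := congrArg Multiset.card ((nzm_eq_map_support (fun i => (g i : ℕ))).symm.trans hg)
    rw [Finset.card_def, Finset.filter_val]
    simpa [hd] using this
  -- fiber characterization
  have hfiber_char : ∀ (g : Fin z → Fin (N+1)), nzm (fun i => (g i : ℕ)) = (LT : Multiset ℕ) →
      ∀ ι : Fin d ↪ Fin z, (Φ ι = g ↔ ∀ j, (g (ι j) : ℕ) = u j) := by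
    intro g hg ι
    constructor
    · intro he j
      rw [← he, hΦapp]
    · intro hj
      -- support of g equals range of ι
      have hsub : Finset.univ.map ι ⊆ Finset.univ.filter (fun i => (g i : ℕ) ≠ 0) := by
        intro i hi
        obtain ⟨j, _, rfl⟩ := Finset.mem_map.1 hi
        simp only [Finset.mem_filter, Finset.mem_univ, true_and]
        rw [hj j]; exact hune j
      have hcards : (Finset.univ.filter (fun i => (g i : ℕ) ≠ 0)).card ≤
          (Finset.univ.map ι).card := by
        rw [Finset.card_map, Finset.card_univ, Fintype.card_fin, hcard_supp g hg]
      have heqset := Finset.eq_of_subset_of_card_le hsub hcards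
      funext i
      by_cases hx : ∃ j, ι j = i
      · obtain ⟨j, rfl⟩ := hx
        have h1 := hΦapp ι j
        have h2 := hj j
        exact Fin.ext (by rw [h1, h2])
      · rw [hΦ0 ι i hx]
        by_contra hne
        have : i ∈ Finset.univ.filter (fun i => (g i : ℕ) ≠ 0) := by
          simp only [Finset.mem_filter, Finset.mem_univ, true_and]
          intro h0
          exact hne (Fin.ext h0).symm
        rw [← heqset] at this
        obtain ⟨j, _, hji⟩ := Finset.mem_map.1 this
        exact hx ⟨j, hji⟩
  -- existence of a base embedding over each g in the fiber
  have hexists : ∀ (g : Fin z → Fin (N+1)), nzm (fun i => (g i : ℕ)) = (LT : Multiset ℕ) →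
      ∃ ι : Fin d ↪ Fin z, ∀ j, (g (ι j) : ℕ) = u j := by
    intro g hg
    have hc : (Finset.univ.filter (fun i => (g i : ℕ) ≠ 0)).card = d := hcard_supp g hg
    have hcc : Fintype.card (Finset.univ.filter (fun i => (g i : ℕ) ≠ 0) : Finset (Fin z)) = d := by
      rw [Fintype.card_coe, hc]
    let ε : Fin d ≃ (Finset.univ.filter (fun i => (g i : ℕ) ≠ 0) : Finset (Fin z)) :=
      (finCongr hc.symm).trans (Finset.univ.filter (fun i => (g i : ℕ) ≠ 0)).equivFin.symm
    have hv : Multiset.map (fun j => ((g ((ε j : _) : Fin z)) : ℕ)) Finset.univ.val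
        = Multiset.map u Finset.univ.val := by
      have h1 := map_univ_comp_equiv ε
        (fun x : (Finset.univ.filter (fun i => (g i : ℕ) ≠ 0) : Finset (Fin z)) =>
          ((g (x : Fin z)) : ℕ))
      rw [← h1]
      have h2 : (Finset.univ :
          Finset (Finset.univ.filter (fun i => (g i : ℕ) ≠ 0) : Finset (Fin z))).val.map
          (Subtype.val) = (Finset.univ.filter (fun i => (g i : ℕ) ≠ 0)).val := by
        rw [Finset.univ_eq_attach, Finset.attach_val, Multiset.attach_map_val]
      calc Multiset.map (fun x : (Finset.univ.filter (fun i => (g i : ℕ) ≠ 0) : Finset (Fin z)) =>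
              ((g (x : Fin z)) : ℕ)) Finset.univ.val
          = Multiset.map (fun i : Fin z => (g i : ℕ))
              (Multiset.map Subtype.val Finset.univ.val) := by
            rw [Multiset.map_map]
            rfl
        _ = Multiset.map (fun i : Fin z => (g i : ℕ))
              (Finset.univ.filter (fun i => (g i : ℕ) ≠ 0)).val := by rw [h2]
        _ = Multiset.map u Finset.univ.val := by rw [← nzm_eq_map_support, hg, hofn]
    obtain ⟨σ, hσ⟩ := exists_perm_comp u (fun j => ((g ((ε j : _) : Fin z)) : ℕ)) hv.symm
    refine ⟨⟨fun j => ((ε (σ j) : _) : Fin z), ?_⟩, ?_⟩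
    · intro j1 j2 he
      exact σ.injective (ε.injective (Subtype.val_injective he))
    · intro j
      exact (congrFun hσ j).symm
  -- the fiber over g has cardinality autT
  have hfibcard : ∀ (g : Fin z → Fin (N+1)), nzm (fun i => (g i : ℕ)) = (LT : Multiset ℕ) →
      Fintype.card {ι : Fin d ↪ Fin z // Φ ι = g} = autT (LT : Multiset ℕ) := by
    intro g hg
    obtain ⟨ι0, hι0⟩ := hexists g hg
    have key : ∀ ι : Fin d ↪ Fin z, (∀ j, (g (ι j) : ℕ) = u j) →
        ∀ j, ∃ j', ι0 j' = ι j := by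
      intro ι hι j
      have hsub : Finset.univ.map ι0 ⊆ Finset.univ.filter (fun i => (g i : ℕ) ≠ 0) := by
        intro i hi
        obtain ⟨j', _, rfl⟩ := Finset.mem_map.1 hi
        simp only [Finset.mem_filter, Finset.mem_univ, true_and]
        rw [hι0 j']; exact hune j'
      have hcards : (Finset.univ.filter (fun i => (g i : ℕ) ≠ 0)).card ≤
          (Finset.univ.map ι0).card := by
        rw [Finset.card_map, Finset.card_univ, Fintype.card_fin, hcard_supp g hg]
      have heqset := Finset.eq_of_subset_of_card_le hsub hcards
      have : ι j ∈ Finset.univ.map ι0 := by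
        rw [heqset]
        simp only [Finset.mem_filter, Finset.mem_univ, true_and]
        rw [hι j]; exact hune j
      obtain ⟨j', _, hj'⟩ := Finset.mem_map.1 this
      exact ⟨j', hj'⟩
    have e2 : {ι : Fin d ↪ Fin z // Φ ι = g} ≃ {π : Equiv.Perm (Fin d) // u ∘ π = u} := by
      refine Equiv.trans (Equiv.subtypeEquivRight (fun ι => hfiber_char g hg ι)) ?_
      have hWbij : ∀ x : {ι : Fin d ↪ Fin z // ∀ j, (g (ι j) : ℕ) = u j},
          Function.Bijective (fun j => Classical.choose (key x.1 x.2 j)) := by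
        intro x
        apply Finite.injective_iff_bijective.1
        intro j1 j2 he
        apply x.1.injective
        rw [← Classical.choose_spec (key x.1 x.2 j1), ← Classical.choose_spec (key x.1 x.2 j2)]
        exact congrArg ι0 he
      set W : {ι : Fin d ↪ Fin z // ∀ j, (g (ι j) : ℕ) = u j} → Equiv.Perm (Fin d) :=
        fun x => Equiv.ofBijective _ (hWbij x) with hWdef
      have hW : ∀ x j, ι0 (W x j) = x.1 j := fun x j => Classical.choose_spec (key x.1 x.2 j)
      refine { toFun := fun x => ⟨W x, ?_⟩,
               invFun := fun y => ⟨⟨fun j => ι0 (y.1 j),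
                 fun j1 j2 he => y.1.injective (ι0.injective he)⟩, fun j => ?_⟩,
               left_inv := ?_, right_inv := ?_ }
      · funext j
        show u (W x j) = u j
        rw [← hι0 (W x j), hW x j, x.2 j]
      · show (g (ι0 (y.1 j)) : ℕ) = u j
        rw [hι0 (y.1 j)]
        exact congrFun y.2 j
      · intro x
        apply Subtype.ext
        apply DFunLike.ext
        intro j
        exact hW x j
      · intro y
        apply Subtype.ext
        apply Equiv.ext
        intro j
        apply ι0.injective
        exact hW _ j
    rw [Fintype.card_congr e2, DomMulAct.stabilizer_card' u, autT]
    have himg : Finset.univ.image u = (LT : Multiset ℕ).toFinset := by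
      rw [Fin.univ_image_def, hu, List.ofFn_get, List.toFinset_coe LT]
    rw [himg]
    refine Finset.prod_congr rfl (fun v _ => ?_)
    congr 1
    rw [← hofn, Multiset.count_map, Fintype.card_subtype]
    rw [Finset.card_def, Finset.filter_val]
    congr 1
    exact Multiset.filter_congr (fun j _ => eq_comm)
  -- assemble
  have hmem : ∀ ι ∈ (Finset.univ : Finset (Fin d ↪ Fin z)),
      Φ ι ∈ Finset.univ.filter
        (fun h : Fin z → Fin (N+1) => nzm (fun i => (h i : ℕ)) = (LT : Multiset ℕ)) := by
    intro ι _
    simp only [Finset.mem_filter, Finset.mem_univ, true_and]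
    exact hΦmem ι
  have main := Finset.card_eq_sum_card_fiberwise hmem
  rw [Finset.card_univ, Fintype.card_embedding_eq, Fintype.card_fin, Fintype.card_fin] at main
  have hterm : ∀ g ∈ Finset.univ.filter
      (fun h : Fin z → Fin (N+1) => nzm (fun i => (h i : ℕ)) = (LT : Multiset ℕ)),
      ((Finset.univ : Finset (Fin d ↪ Fin z)).filter (fun ι => Φ ι = g)).card
        = autT (LT : Multiset ℕ) := by
    intro g hgmem
    have hg := (Finset.mem_filter.1 hgmem).2
    rw [← hfibcard g hg, Fintype.card_subtype]
  rw [Finset.sum_congr rfl hterm, Finset.sum_const, smul_eq_mul] at main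
  have : Multiset.card (LT : Multiset ℕ) = d := by
    rw [Multiset.coe_card]
  rw [this, ← main]

def P2' (L : List (ℕ × ℕ)) (f : Fin L.length → ℕ) : Multiset (ℕ × ℕ) :=
  (Multiset.map (fun j => ((L.get j).1, f j)) Finset.univ.val).filter fun p => p ≠ (0, 0)

def P1' (L : List (ℕ × ℕ)) (f : Fin L.length → ℕ) : Multiset (ℕ × ℕ) :=
  (Multiset.map (fun j => (f j, (L.get j).2)) Finset.univ.val).filter fun p => p ≠ (0, 0)

def T2m (m2 : Multiset (ℕ × ℕ)) (L : List (ℕ × ℕ)) (f : Fin L.length → ℕ) : Multiset ℕ :=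
  (m2 - P2' L f).map Prod.snd

def compatP (k : ℕ) (m1 m2 : Multiset (ℕ × ℕ)) (L : List (ℕ × ℕ))
    (f : Fin L.length → ℕ) : Prop :=
  P2' L f + (T2m m2 L f).map (Prod.mk 0) = m2 ∧
  P1' L f + (T2m m2 L f).map (fun x => (x, 0)) = m1 ∧
  (0 : ℕ) ∉ T2m m2 L f ∧ (∑ j, f j) + (T2m m2 L f).sum = k

def condP (k : ℕ) (m1 m2 : Multiset (ℕ × ℕ)) (L : List (ℕ × ℕ)) {s : ℕ}
    (f : Fin L.length → ℕ) (h : Fin s → ℕ) : Prop :=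
  P2' L f + (nzm h).map (Prod.mk 0) = m2 ∧
  P1' L f + (nzm h).map (fun x => (x, 0)) = m1 ∧
  (∑ j, f j) + (∑ t, h t) = k

instance {k m1 m2 L f} : Decidable (compatP k m1 m2 L f) :=
  decidable_of_iff (P2' L f + (T2m m2 L f).map (Prod.mk 0) = m2 ∧
    P1' L f + (T2m m2 L f).map (fun x => (x, 0)) = m1 ∧
    (0 : ℕ) ∉ T2m m2 L f ∧ (∑ j, f j) + (T2m m2 L f).sum = k) Iff.rfl

instance {k m1 m2 L s} {f : Fin L.length → ℕ} {h : Fin s → ℕ} :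
    Decidable (condP k m1 m2 L f h) :=
  decidable_of_iff (P2' L f + (nzm h).map (Prod.mk 0) = m2 ∧
    P1' L f + (nzm h).map (fun x => (x, 0)) = m1 ∧
    (∑ j, f j) + (∑ t, h t) = k) Iff.rfl

lemma sum_nzm {z : ℕ} (h : Fin z → ℕ) : (nzm h).sum = ∑ t, h t := by
  have hsplit := Multiset.filter_add_not (fun x => x ≠ 0) (Multiset.map h Finset.univ.val)
  have h0 : ((Multiset.map h Finset.univ.val).filter (fun x => ¬ x ≠ 0)).sum = 0 := by
    apply Multiset.sum_eq_zero
    intro x hx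
    have := (Multiset.mem_filter.1 hx).2
    simpa using this
  have : ∑ t, h t = (Multiset.map h Finset.univ.val).sum := rfl
  rw [this, ← hsplit, Multiset.sum_add, h0, add_zero, nzm]

lemma zero_not_nzm {z : ℕ} (h : Fin z → ℕ) : (0 : ℕ) ∉ nzm h := by
  simp [nzm]

lemma mem_le_sum (s : Multiset ℕ) {a : ℕ} (h : a ∈ s) : a ≤ s.sum := by
  obtain ⟨t, rfl⟩ := Multiset.exists_cons_of_mem h
  rw [Multiset.sum_cons]
  exact Nat.le_add_right _ _

lemma cond_iff {k : ℕ} {m1 m2 : Multiset (ℕ × ℕ)} {L : List (ℕ × ℕ)} {s : ℕ}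
    (f : Fin L.length → ℕ) (h : Fin s → ℕ) :
    condP k m1 m2 L f h ↔ compatP k m1 m2 L f ∧ nzm h = T2m m2 L f := by
  constructor
  · rintro ⟨h1, h2, h3⟩
    have hnz : (nzm h).map (Prod.mk 0) = m2 - P2' L f := by
      rw [← h1, add_tsub_cancel_left]
    have hT : nzm h = T2m m2 L f := by
      rw [T2m, ← hnz, Multiset.map_map]
      rw [show (Prod.snd ∘ Prod.mk (0:ℕ) : ℕ → ℕ) = id from rfl, Multiset.map_id]
    refine ⟨⟨?_, ?_, ?_, ?_⟩, hT⟩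
    · rw [← hT]; exact h1
    · rw [← hT]; exact h2
    · rw [← hT]; exact zero_not_nzm h
    · rw [← hT, sum_nzm]; exact h3
  · rintro ⟨⟨c1, c2, _, c4⟩, hT⟩
    refine ⟨?_, ?_, ?_⟩
    · rw [hT]; exact c1
    · rw [hT]; exact c2
    · rw [← sum_nzm h, hT]; exact c4

lemma card_fiber (k : ℕ) (m1 m2 : Multiset (ℕ × ℕ)) (hm2s : (m2.map Prod.snd).sum = k)
    (L : List (ℕ × ℕ)) {s : ℕ} (f : Fin L.length → ℕ) :
    ((Fintype.card {h : Fin s → Fin (k+1) //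
        condP k m1 m2 L f (fun t => (h t : ℕ))} : ℚ)) * (autT (T2m m2 L f) : ℚ)
      = if compatP k m1 m2 L f then (s.descFactorial (Multiset.card (T2m m2 L f)) : ℚ) else 0 := by
  by_cases hc : compatP k m1 m2 L f
  · rw [if_pos hc]
    have he : {h : Fin s → Fin (k+1) // condP k m1 m2 L f (fun t => (h t : ℕ))} ≃
        {h : Fin s → Fin (k+1) // nzm (fun t => (h t : ℕ)) = T2m m2 L f} :=
      Equiv.subtypeEquivRight (fun h => by rw [cond_iff]; exact ⟨fun x => x.2, fun x => ⟨hc, x⟩⟩)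
    rw [Fintype.card_congr he, Fintype.card_subtype]
    have h0 : (0:ℕ) ∉ T2m m2 L f := hc.2.2.1
    have hbound : ∀ v ∈ T2m m2 L f, v ≤ k := by
      intro v hv
      have hvm : ((0:ℕ), v) ∈ m2 := by
        rw [← hc.1]
        refine Multiset.mem_add.2 (Or.inr ?_)
        exact Multiset.mem_map.2 ⟨v, hv, rfl⟩
      have : v ∈ m2.map Prod.snd := Multiset.mem_map.2 ⟨_, hvm, rfl⟩
      exact hm2s ▸ mem_le_sum _ this
    have := card_nzm (z := s) (N := k) (T2m m2 L f) h0 hbound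
    exact_mod_cast congrArg (Nat.cast : ℕ → ℚ) this
  · rw [if_neg hc]
    have : Fintype.card {h : Fin s → Fin (k+1) //
        condP k m1 m2 L f (fun t => (h t : ℕ))} = 0 := by
      rw [Fintype.card_eq_zero_iff]
      exact ⟨fun x => hc ((cond_iff _ _).1 x.2).1⟩
    rw [this]
    simp

lemma map_univ_split {n r s : ℕ} (e : Fin r ⊕ Fin s ≃ Fin n) {γ : Type*} (F : Fin n → γ) :
    Multiset.map F Finset.univ.val =
      Multiset.map (fun j => F (e (Sum.inl j))) Finset.univ.val +
      Multiset.map (fun t => F (e (Sum.inr t))) Finset.univ.val := by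
  rw [map_univ_comp_equiv e F, ← Finset.univ_disjSum_univ, Finset.val_disjSum,
    Multiset.disjSum, Multiset.map_add, Multiset.map_map, Multiset.map_map]
  rfl

lemma filter_zero_pairs {s : ℕ} (h : Fin s → ℕ) :
    (Multiset.map (fun t => ((0:ℕ), h t)) Finset.univ.val).filter
        (fun p => p ≠ ((0:ℕ), (0:ℕ)))
      = (nzm h).map (Prod.mk 0) := by
  rw [show (fun t : Fin s => ((0:ℕ), h t)) = (Prod.mk (0:ℕ)) ∘ h from rfl, ← Multiset.map_map,
    Multiset.filter_map, nzm]
  congr 1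
  apply Multiset.filter_congr
  intro x _
  simp [Function.comp, Prod.ext_iff]

lemma filter_zero_pairs' {s : ℕ} (h : Fin s → ℕ) :
    (Multiset.map (fun t => (h t, (0:ℕ))) Finset.univ.val).filter
        (fun p => p ≠ ((0:ℕ), (0:ℕ)))
      = (nzm h).map (fun x => (x, (0:ℕ))) := by
  rw [show (fun t : Fin s => (h t, (0:ℕ))) = (fun x : ℕ => (x, (0:ℕ))) ∘ h from rfl,
    ← Multiset.map_map, Multiset.filter_map, nzm]
  congr 1
  apply Multiset.filter_congr
  intro x _
  simp [Function.comp, Prod.ext_iff]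

lemma epairs_split_a {k n s : ℕ} (L : List (ℕ × ℕ)) (e : Fin L.length ⊕ Fin s ≃ Fin n)
    (a0 b : Mnk n k)
    (ha1 : ∀ j, a0.1 (e (Sum.inl j)) = (L.get j).1) (ha2 : ∀ t, a0.1 (e (Sum.inr t)) = 0) :
    Epairs a0 b = P2' L (fun j => b.1 (e (Sum.inl j)))
      + (nzm (fun t => b.1 (e (Sum.inr t)))).map (Prod.mk 0) := by
  rw [Epairs, map_univ_split e, Multiset.filter_add, P2']
  congr 1
  · congr 1
    apply Multiset.map_congr rfl
    intro j _
    rw [ha1]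
  · rw [← filter_zero_pairs]
    congr 1
    apply Multiset.map_congr rfl
    intro t _
    rw [ha2]

lemma epairs_split_c {k n s : ℕ} (L : List (ℕ × ℕ)) (e : Fin L.length ⊕ Fin s ≃ Fin n)
    (c0 b : Mnk n k)
    (hc1 : ∀ j, c0.1 (e (Sum.inl j)) = (L.get j).2) (hc2 : ∀ t, c0.1 (e (Sum.inr t)) = 0) :
    Epairs b c0 = P1' L (fun j => b.1 (e (Sum.inl j)))
      + (nzm (fun t => b.1 (e (Sum.inr t)))).map (fun x => (x, (0:ℕ))) := by
  rw [Epairs, map_univ_split e, Multiset.filter_add, P1']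
  congr 1
  · congr 1
    apply Multiset.map_congr rfl
    intro j _
    rw [hc1]
  · rw [← filter_zero_pairs']
    congr 1
    apply Multiset.map_congr rfl
    intro t _
    rw [hc2]

lemma sum_split {n r s : ℕ} (e : Fin r ⊕ Fin s ≃ Fin n) (b : Fin n → ℕ) :
    ∑ i, b i = (∑ j, b (e (Sum.inl j))) + ∑ t, b (e (Sum.inr t)) := by
  rw [← Equiv.sum_comp e b, Fintype.sum_sum_type]

lemma card_canonical (k n s : ℕ) (m1 m2 : Multiset (ℕ × ℕ)) (L : List (ℕ × ℕ))
    (e : Fin L.length ⊕ Fin s ≃ Fin n) (a0 c0 : Mnk n k)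
    (ha1 : ∀ j, a0.1 (e (Sum.inl j)) = (L.get j).1) (ha2 : ∀ t, a0.1 (e (Sum.inr t)) = 0)
    (hc1 : ∀ j, c0.1 (e (Sum.inl j)) = (L.get j).2) (hc2 : ∀ t, c0.1 (e (Sum.inr t)) = 0) :
    Nat.card {b : Mnk n k // Epairs a0 b = m2 ∧ Epairs b c0 = m1}
      = ∑ f : Fin L.length → Fin (k+1),
          Fintype.card {h : Fin s → Fin (k+1) //
            condP k m1 m2 L (fun j => (f j : ℕ)) (fun t => (h t : ℕ))} := by
  have hble : ∀ b : Mnk n k, ∀ i, b.1 i < k + 1 := by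
    intro b i
    have := Finset.single_le_sum (f := b.1) (fun _ _ => Nat.zero_le _) (Finset.mem_univ i)
    rw [b.2] at this
    exact Nat.lt_succ_of_le this
  have E : {b : Mnk n k // Epairs a0 b = m2 ∧ Epairs b c0 = m1} ≃
      {x : (Fin L.length → Fin (k+1)) × (Fin s → Fin (k+1)) //
        condP k m1 m2 L (fun j => (x.1 j : ℕ)) (fun t => (x.2 t : ℕ))} := by
    refine { toFun := fun bb => ⟨(fun j => ⟨bb.1.1 (e (Sum.inl j)), hble bb.1 _⟩,
               fun t => ⟨bb.1.1 (e (Sum.inr t)), hble bb.1 _⟩), ?_⟩,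
             invFun := fun x => ⟨⟨fun i => Sum.elim (fun j => (x.1.1 j : ℕ))
               (fun t => (x.1.2 t : ℕ)) (e.symm i), ?_⟩, ?_, ?_⟩,
             left_inv := ?_, right_inv := ?_ }
    case _ =>
      obtain ⟨⟨b, hb⟩, h2, h1⟩ := bb
      refine ⟨?_, ?_, ?_⟩
      · rw [← epairs_split_a L e a0 ⟨b, hb⟩ ha1 ha2]; exact h2
      · rw [← epairs_split_c L e c0 ⟨b, hb⟩ hc1 hc2]; exact h1
      · rw [← sum_split e b]; exact hb
    case _ =>
      rw [sum_split e]
      simp only [Equiv.symm_apply_apply, Sum.elim_inl, Sum.elim_inr]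
      exact x.2.2.2
    case _ =>
      rw [epairs_split_a L e a0 _ ha1 ha2]
      simp only [Equiv.symm_apply_apply, Sum.elim_inl, Sum.elim_inr]
      exact x.2.1
    case _ =>
      rw [epairs_split_c L e c0 _ hc1 hc2]
      simp only [Equiv.symm_apply_apply, Sum.elim_inl, Sum.elim_inr]
      exact x.2.2.1
    case _ =>
      intro bb
      apply Subtype.ext
      apply Subtype.ext
      funext i
      show Sum.elim _ _ (e.symm i) = bb.1.1 i
      rcases hsi : e.symm i with j | t
      · have : i = e (Sum.inl j) := by
          rw [← hsi, Equiv.apply_symm_apply]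
        rw [this]
        simp
      · have : i = e (Sum.inr t) := by
          rw [← hsi, Equiv.apply_symm_apply]
        rw [this]
        simp
    case _ =>
      intro x
      apply Subtype.ext
      refine Prod.ext ?_ ?_
      · funext j
        apply Fin.ext
        show Sum.elim _ _ (e.symm (e (Sum.inl j))) = _
        simp
      · funext t
        apply Fin.ext
        show Sum.elim _ _ (e.symm (e (Sum.inr t))) = _
        simp
  rw [Nat.card_congr E, Nat.card_congr (Equiv.subtypeProdEquivSigmaSubtype
    (fun (f : Fin L.length → Fin (k+1)) (h : Fin s → Fin (k+1)) =>
      condP k m1 m2 L (fun j => (f j : ℕ)) (fun t => (h t : ℕ)))),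
    Nat.card_eq_fintype_card, Fintype.card_sigma]

lemma full_eq {n : ℕ} (F G : Fin n → ℕ × ℕ)
    (h : (Multiset.map F Finset.univ.val).filter (fun p => p ≠ (0, 0))
       = (Multiset.map G Finset.univ.val).filter (fun p => p ≠ (0, 0))) :
    Multiset.map F Finset.univ.val = Multiset.map G Finset.univ.val := by
  have key : ∀ s : Multiset (ℕ × ℕ), Multiset.card s = n →
      s = s.filter (fun p => p ≠ (0, 0)) +
        Multiset.replicate (n - Multiset.card (s.filter (fun p => p ≠ (0, 0))))
          ((0 : ℕ), (0 : ℕ)) := by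
    intro s hs
    have h1 : s.filter (fun x => ¬ x ≠ ((0:ℕ), (0:ℕ)))
        = s.filter (fun x => x = ((0:ℕ), (0:ℕ))) :=
      Multiset.filter_congr (fun x _ => by simp)
    conv_lhs => rw [← Multiset.filter_add_not (fun p => p ≠ (0, 0)) s]
    congr 1
    rw [h1, Multiset.filter_eq']
    congr 1
    have h2 := congrArg Multiset.card (Multiset.filter_add_not (fun p => p ≠ (0, 0)) s)
    rw [Multiset.card_add, hs, h1, Multiset.filter_eq', Multiset.card_replicate] at h2
    omega
  have hcF : Multiset.card (Multiset.map F Finset.univ.val) = n := by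
    rw [Multiset.card_map]
    exact Finset.card_univ.trans (Fintype.card_fin n)
  have hcG : Multiset.card (Multiset.map G Finset.univ.val) = n := by
    rw [Multiset.card_map]
    exact Finset.card_univ.trans (Fintype.card_fin n)
  rw [key _ hcF, key _ hcG, h]

lemma permA_permA {n k : ℕ} (w w' : Equiv.Perm (Fin n)) (b : Mnk n k) :
    permA w (permA w' b) = permA (w * w') b := by
  apply Subtype.ext
  funext i
  simp [permA, Equiv.Perm.mul_apply]

lemma int_valued (T : Multiset ℕ) (w : ℤ) :
    ∃ t : ℤ, ((autT T : ℚ))⁻¹ * (descPochhammer ℚ (Multiset.card T)).eval (w : ℚ) = t := by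
  set d := Multiset.card T with hd
  have hautpos : 0 < autT T := Finset.prod_pos (fun _ _ => Nat.factorial_pos _)
  have haut : (autT T : ℚ) ≠ 0 := Nat.cast_ne_zero.2 hautpos.ne'
  have hdvd1 : autT T ∣ d.factorial := by
    have := Nat.prod_factorial_dvd_factorial_sum T.toFinset (fun v => T.count v)
    rwa [Multiset.toFinset_sum_count_eq] at this
  have hdvd2 : (d.factorial : ℤ) ∣ (descPochhammer ℤ d).eval w := by
    rcases le_or_gt 0 w with hw | hw
    · obtain ⟨a, rfl⟩ : ∃ a : ℕ, w = (a : ℤ) := ⟨w.toNat, (Int.toNat_of_nonneg hw).symm⟩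
      rw [descPochhammer_eval_eq_descFactorial]
      exact Int.natCast_dvd_natCast.2 (Nat.factorial_dvd_descFactorial a d)
    · have hkey := ascPochhammer_eval_neg_eq_descPochhammer (R := ℤ) w d
      have h2 : (descPochhammer ℤ d).eval w = (-1 : ℤ)^d * (ascPochhammer ℤ d).eval (-w) := by
        rw [hkey, ← mul_assoc, ← pow_add, ← two_mul, pow_mul]
        norm_num
      obtain ⟨a, ha⟩ : ∃ a : ℕ, -w = (a : ℤ) :=
        ⟨(-w).toNat, (Int.toNat_of_nonneg (by omega)).symm⟩
      rw [h2, ha]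
      have h3 : (ascPochhammer ℤ d).eval ((a : ℤ)) = ((a.ascFactorial d : ℕ) : ℤ) := by
        rw [← ascPochhammer_eval_cast (S := ℤ) d a, ascPochhammer_nat_eq_ascFactorial]
      rw [h3]
      exact Dvd.dvd.mul_left (Int.natCast_dvd_natCast.2 (Nat.factorial_dvd_ascFactorial a d)) _
  obtain ⟨q, hq⟩ := dvd_trans (Int.natCast_dvd_natCast.2 hdvd1) hdvd2
  refine ⟨q, ?_⟩
  have hcast : (((descPochhammer ℤ d).eval w : ℤ) : ℚ) = (descPochhammer ℚ d).eval (w : ℚ) :=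
    descPochhammer_eval_cast (R := ℚ) d w
  rw [← hcast, hq]
  push_cast
  rw [inv_mul_cancel_left₀ haut]

/-- For multiset partitions `m₁, m₂, m` of `{1^k,1'^k}`, there is a polynomial `p` with
rational coefficients such that for every positive integer `n` and all `a, c ∈ M(n,k)`
with `E(a,c) = m`, the number of `b ∈ M(n,k)` with `E(a,b) = m₂` and `E(b,c) = m₁`
equals `p(n)`; moreover `p` takes integer values at all integers. -/
theorem stmt3 (k : ℕ) (hk : 0 < k) (m1 m2 m : Multiset (ℕ × ℕ))
    (hm1 : IsMSP k m1) (hm2 : IsMSP k m2) (hm : IsMSP k m) :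
    ∃ p : Polynomial ℚ,
      (∀ n : ℕ, 0 < n → ∀ a c : Mnk n k, Epairs a c = m →
        (Nat.card {b : Mnk n k // Epairs a b = m2 ∧ Epairs b c = m1} : ℚ) =
          p.eval (n : ℚ)) ∧
      (∀ z : ℤ, ∃ t : ℤ, p.eval (z : ℚ) = (t : ℚ)) := by
  classical
  obtain ⟨hm0, hmf, hms⟩ := hm
  obtain ⟨hm20, hm2f, hm2s⟩ := hm2
  set L := m.toList with hLdef
  have hLm : (L : Multiset (ℕ × ℕ)) = m := m.coe_toList
  set r := L.length with hrdef
  set p : Polynomial ℚ := ∑ f ∈ (Finset.univ : Finset (Fin r → Fin (k+1))),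
    if compatP k m1 m2 L (fun j => (f j : ℕ)) then
      Polynomial.C ((autT (T2m m2 L (fun j => (f j : ℕ))) : ℚ))⁻¹ *
        ((descPochhammer ℚ (Multiset.card (T2m m2 L (fun j => (f j : ℕ))))).comp
          (Polynomial.X - Polynomial.C (r : ℚ)))
    else 0 with hp
  have hevalp : ∀ x : ℚ, p.eval x = ∑ f : Fin r → Fin (k+1),
      if compatP k m1 m2 L (fun j => (f j : ℕ)) then
        ((autT (T2m m2 L (fun j => (f j : ℕ))) : ℚ))⁻¹ *
          (descPochhammer ℚ (Multiset.card (T2m m2 L (fun j => (f j : ℕ))))).eval (x - r)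
      else 0 := by
    intro x
    rw [hp, Polynomial.eval_finset_sum]
    refine Finset.sum_congr rfl (fun f _ => ?_)
    split_ifs with hc
    · rw [Polynomial.eval_mul, Polynomial.eval_C, Polynomial.eval_comp, Polynomial.eval_sub,
        Polynomial.eval_X, Polynomial.eval_C]
    · simp
  refine ⟨p, ?_, ?_⟩
  · intro n hn a c hac
    -- r ≤ n
    have hrn : r ≤ n := by
      have h1 : Multiset.card m ≤ n := by
        rw [← hac, Epairs]
        calc Multiset.card ((Multiset.map (fun i => (a.1 i, c.1 i)) Finset.univ.val).filter _)
            ≤ Multiset.card (Multiset.map (fun i => (a.1 i, c.1 i)) Finset.univ.val) :=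
              Multiset.card_le_card (Multiset.filter_le _ _)
          _ = n := by
              rw [Multiset.card_map]
              exact Finset.card_univ.trans (Fintype.card_fin n)
      have h2 : r = Multiset.card m := by rw [hrdef, ← hLm, Multiset.coe_card]
      omega
    set e : Fin r ⊕ Fin (n - r) ≃ Fin n :=
      finSumFinEquiv.trans (finCongr (by omega)) with he
    -- canonical a0 c0
    have hsum1 : ∑ j : Fin r, (L.get j).1 = k := by
      have h1 : ∑ j : Fin r, (L.get j).1 = (List.ofFn (fun j : Fin r => (L.get j).1)).sum :=
        (List.sum_ofFn).symm
      have h2 : List.ofFn (fun j : Fin r => (L.get j).1) = L.map Prod.fst := by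
        rw [show (fun j : Fin r => (L.get j).1) = Prod.fst ∘ L.get from rfl, ← List.map_ofFn,
          List.ofFn_get]
      rw [h1, h2, ← hmf, ← hLm, Multiset.map_coe, Multiset.sum_coe]
    have hsum2 : ∑ j : Fin r, (L.get j).2 = k := by
      have h1 : ∑ j : Fin r, (L.get j).2 = (List.ofFn (fun j : Fin r => (L.get j).2)).sum :=
        (List.sum_ofFn).symm
      have h2 : List.ofFn (fun j : Fin r => (L.get j).2) = L.map Prod.snd := by
        rw [show (fun j : Fin r => (L.get j).2) = Prod.snd ∘ L.get from rfl, ← List.map_ofFn,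
          List.ofFn_get]
      rw [h1, h2, ← hms, ← hLm, Multiset.map_coe, Multiset.sum_coe]
    set a0 : Mnk n k := ⟨fun i => Sum.elim (fun j => (L.get j).1)
        (fun _ => 0) (e.symm i), by
      rw [sum_split e]
      simp only [Equiv.symm_apply_apply, Sum.elim_inl, Sum.elim_inr]
      rw [Finset.sum_const, smul_zero, add_zero, hsum1]⟩ with ha0
    set c0 : Mnk n k := ⟨fun i => Sum.elim (fun j => (L.get j).2)
        (fun _ => 0) (e.symm i), by
      rw [sum_split e]
      simp only [Equiv.symm_apply_apply, Sum.elim_inl, Sum.elim_inr]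
      rw [Finset.sum_const, smul_zero, add_zero, hsum2]⟩ with hc0
    have ha1 : ∀ j, a0.1 (e (Sum.inl j)) = (L.get j).1 := by
      intro j; rw [ha0]; simp
    have ha2 : ∀ t, a0.1 (e (Sum.inr t)) = 0 := by
      intro t; rw [ha0]; simp
    have hc1 : ∀ j, c0.1 (e (Sum.inl j)) = (L.get j).2 := by
      intro j; rw [hc0]; simp
    have hc2 : ∀ t, c0.1 (e (Sum.inr t)) = 0 := by
      intro t; rw [hc0]; simp
    -- Epairs a0 c0 = m
    have hE0 : Epairs a0 c0 = m := by
      rw [epairs_split_a L e a0 c0 ha1 ha2]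
      rw [show (fun j => c0.1 (e (Sum.inl j))) = fun j => (L.get j).2 from funext hc1,
        show (fun t => c0.1 (e (Sum.inr t))) = fun _ => (0:ℕ) from funext hc2]
      have hz : nzm (fun _ : Fin (n - r) => (0:ℕ)) = 0 := by
        rw [nzm, Multiset.filter_eq_nil.2]
        intro x hx
        obtain ⟨i, _, rfl⟩ := Multiset.mem_map.1 hx
        simp
      rw [hz, Multiset.map_zero, add_zero, P2']
      have hfn : (fun j : Fin r => ((L.get j).1, (L.get j).2)) = L.get := funext fun j => rfl
      rw [hfn, Fin.univ_val_map, List.ofFn_get, hLm]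
      exact Multiset.filter_eq_self.2 (fun x hx hx0 => hm0 (hx0 ▸ hx))
    -- find the permutation
    have hfull := full_eq (fun i => (a.1 i, c.1 i)) (fun i => (a0.1 i, c0.1 i))
      (show Epairs a c = Epairs a0 c0 by rw [hac, hE0])
    obtain ⟨σ, hσ⟩ := exists_perm_comp _ _ hfull
    have hai : ∀ i, a.1 i = a0.1 (σ i) := fun i => congrArg Prod.fst (congrFun hσ i)
    have hci : ∀ i, c.1 i = c0.1 (σ i) := fun i => congrArg Prod.snd (congrFun hσ i)
    -- transport the count
    have hEa : ∀ b : Mnk n k, Epairs a0 (permA σ b) = Epairs a b := by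
      intro b
      rw [Epairs, Epairs, map_univ_comp_equiv σ (fun i => (a0.1 i, (permA σ b).1 i))]
      congr 1
      apply Multiset.map_congr rfl
      intro i _
      show (a0.1 (σ i), b.1 (σ⁻¹ (σ i))) = (a.1 i, b.1 i)
      rw [show σ⁻¹ (σ i) = i from σ.symm_apply_apply i, hai i]
    have hEc : ∀ b : Mnk n k, Epairs (permA σ b) c0 = Epairs b c := by
      intro b
      rw [Epairs, Epairs, map_univ_comp_equiv σ (fun i => ((permA σ b).1 i, c0.1 i))]
      congr 1
      apply Multiset.map_congr rfl
      intro i _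
      show (b.1 (σ⁻¹ (σ i)), c0.1 (σ i)) = (b.1 i, c.1 i)
      rw [show σ⁻¹ (σ i) = i from σ.symm_apply_apply i, hci i]
    have hperminv : ∀ b : Mnk n k, permA σ (permA σ⁻¹ b) = b := by
      intro b
      rw [permA_permA, mul_inv_cancel]
      apply Subtype.ext
      funext i
      simp [permA]
    have hpermswap : ∀ b : Mnk n k, permA σ⁻¹ (permA σ b) = b := by
      intro b
      rw [permA_permA, inv_mul_cancel]
      apply Subtype.ext
      funext i
      simp [permA]
    have Etrans : {b : Mnk n k // Epairs a b = m2 ∧ Epairs b c = m1} ≃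
        {b : Mnk n k // Epairs a0 b = m2 ∧ Epairs b c0 = m1} := by
      refine { toFun := fun bb => ⟨permA σ bb.1, ?_, ?_⟩,
               invFun := fun bb => ⟨permA σ⁻¹ bb.1, ?_, ?_⟩,
               left_inv := fun bb => Subtype.ext (hpermswap bb.1),
               right_inv := fun bb => Subtype.ext (hperminv bb.1) }
      · rw [hEa]; exact bb.2.1
      · rw [hEc]; exact bb.2.2
      · rw [← hEa (permA σ⁻¹ bb.1), hperminv]; exact bb.2.1
      · rw [← hEc (permA σ⁻¹ bb.1), hperminv]; exact bb.2.2
    rw [Nat.card_congr Etrans, card_canonical k n (n - r) m1 m2 L e a0 c0 ha1 ha2 hc1 hc2]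
    rw [hevalp]
    push_cast
    refine Finset.sum_congr rfl (fun f _ => ?_)
    have hfc := card_fiber k m1 m2 hm2s L (s := n - r) (fun j => (f j : ℕ))
    have hautpos : 0 < autT (T2m m2 L (fun j => (f j : ℕ))) :=
      Finset.prod_pos (fun _ _ => Nat.factorial_pos _)
    have haut : ((autT (T2m m2 L (fun j => (f j : ℕ)))) : ℚ) ≠ 0 :=
      Nat.cast_ne_zero.2 hautpos.ne'
    have hcast : ((n : ℚ) - r) = ((n - r : ℕ) : ℚ) := by
      rw [Nat.cast_sub hrn]
    rw [hcast, descPochhammer_eval_eq_descFactorial]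
    calc (Fintype.card {h : Fin (n - r) → Fin (k+1) //
          condP k m1 m2 L (fun j => (f j : ℕ)) (fun t => (h t : ℕ))} : ℚ)
        = ((Fintype.card {h : Fin (n - r) → Fin (k+1) //
            condP k m1 m2 L (fun j => (f j : ℕ)) (fun t => (h t : ℕ))} : ℚ) *
            (autT (T2m m2 L (fun j => (f j : ℕ))) : ℚ)) *
            ((autT (T2m m2 L (fun j => (f j : ℕ))) : ℚ))⁻¹ := by
          field_simp
      _ = _ := by
          rw [hfc]
          split_ifs with hc
          · rw [mul_comm]
          · rw [zero_mul]
  · intro z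
    have hterm : ∀ f : Fin r → Fin (k+1), ∃ t : ℤ,
        (if compatP k m1 m2 L (fun j => (f j : ℕ)) then
          ((autT (T2m m2 L (fun j => (f j : ℕ))) : ℚ))⁻¹ *
            (descPochhammer ℚ (Multiset.card (T2m m2 L (fun j => (f j : ℕ))))).eval
              ((z : ℚ) - r)
        else 0) = (t : ℚ) := by
      intro f
      split_ifs with hc
      · have hcast : ((z : ℚ) - r) = (((z - (r:ℤ)) : ℤ) : ℚ) := by push_cast; ring
        rw [hcast]
        exact int_valued _ _
      · exact ⟨0, by simp⟩
    choose t ht using hterm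
    refine ⟨∑ f : Fin r → Fin (k+1), t f, ?_⟩
    rw [hevalp]
    push_cast
    exact Finset.sum_congr rfl (fun f _ => ht f)
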